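/- Let D be an L-domain with basis B and least element ⊥. Define I(D) = (B, Con, ⊢, ⊥) where Con = {(i,X) : i ∈ B, X a finite subset of ↓i ∩ B} and (i,X) ⊢ a iff a ≪ ⨆ⁱX (the least upper bound of X in ↓i). Then I(D) is an information system with witnesses. -/
import Mathlib


variable {A : Type*}

/-- An information system with witnesses `(A, Con, ⊢, Δ)`. -/
structure IsISW (Δ : A) (Con : A → Finset A → Prop)
    (ent : A → Finset A → A → Prop) : Prop where
  dom : ∀ i X a, ent i X a → Con i X
  ax1 : ∀ i, Con i {i}
  ax2 : ∀ i (X Y : Finset A), Y ⊆ X → Con i X → Con i Y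
  ax3 : ∀ i, ent i ∅ Δ
  ax4 : ∀ i (X Y : Finset A), Con i X → (∀ b ∈ Y, ent i X b) → Con i Y
  ax5 : ∀ i (X Y : Finset A) (a : A), Con i X → Con i Y → X ⊆ Y → ent i X a → ent i Y a
  ax6 : ∀ i (X Y : Finset A) (a : A), Con i X → (∀ b ∈ Y, ent i X b) → ent i Y a → ent i X a
  ax7 : ∀ i j : A, Con j {i} → ∀ X, Con i X → Con j X
  ax8 : ∀ (i j : A) (X : Finset A) (a : A), Con j {i} → Con i X → ent i X a → ent j X a
  ax9 : ∀ (i j : A) (X : Finset A) (a : A), Con j {i} → Con i X → ent j X a → ent i X a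
  ax10 : ∀ i (X Y : Finset A), Con i X → (∀ b ∈ Y, ent i X b) →
      ∃ e Z, Con e Z ∧ ent i X e ∧ (∀ b ∈ Z, ent i X b) ∧ (∀ b ∈ Y, ent e Z b)

/-- A state of an information system with witnesses: finitely consistent with a
witness in the state (ST1), entailment-closed (ST2), every element derivable (ST3). -/
def IsState (Con : A → Finset A → Prop) (ent : A → Finset A → A → Prop)
    (x : Set A) : Prop :=
  (∀ F : Finset A, ↑F ⊆ x → ∃ i ∈ x, Con i F) ∧
  (∀ i ∈ x, ∀ X : Finset A, ↑X ⊆ x → Con i X → ∀ a, ent i X a → a ∈ x) ∧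
  (∀ a ∈ x, ∃ i ∈ x, ∃ X : Finset A, ↑X ⊆ x ∧ Con i X ∧ ent i X a)

variable {D : Type*}

/-- The way-below (approximation) relation on a poset. -/
def WayBelowP [PartialOrder D] (x y : D) : Prop :=
  ∀ S : Set D, S.Nonempty → DirectedOn (· ≤ ·) S → ∀ s, IsLUB S s → y ≤ s → ∃ u ∈ S, x ≤ u

/-- Directed completeness of a poset. -/
def IsDcpo (D : Type*) [PartialOrder D] : Prop :=
  ∀ S : Set D, S.Nonempty → DirectedOn (· ≤ ·) S → ∃ s, IsLUB S s

/-- `B` is a basis of the poset `D`. -/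
def IsBasisOf [PartialOrder D] (B : Set D) : Prop :=
  ∀ x : D, ∃ S : Set D, S ⊆ {b ∈ B | WayBelowP b x} ∧ S.Nonempty ∧
    DirectedOn (· ≤ ·) S ∧ IsLUB S x

/-- `D` is an L-domain: a directed-complete pointed poset in which any pair of
elements bounded by `z` has a least upper bound in `↓z` (continuity is imposed
separately via the existence of a basis). -/
def IsLDomain (D : Type*) [PartialOrder D] [OrderBot D] : Prop :=
  IsDcpo D ∧ ∀ x y z : D, x ≤ z → y ≤ z →
    ∃ s, s ≤ z ∧ x ≤ s ∧ y ≤ s ∧ ∀ w, w ≤ z → x ≤ w → y ≤ w → s ≤ w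

/-- `s` is the least upper bound of `S` relative to the principal ideal `↓z`. -/
def LubIn [PartialOrder D] (z : D) (S : Set D) (s : D) : Prop :=
  s ≤ z ∧ (∀ a ∈ S, a ≤ s) ∧ ∀ w, w ≤ z → (∀ a ∈ S, a ≤ w) → s ≤ w

/-- Consistency predicate of the information system `I(D)` built on a basis `B`. -/
def ConI [PartialOrder D] (B : Set D) (i : B) (X : Finset B) : Prop :=
  ∀ a ∈ X, (a : D) ≤ (i : D)

/-- Entailment of `I(D)`: `(i,X) ⊢ a` iff `a ≪ ⨆ⁱX`. -/
def entI [PartialOrder D] (B : Set D) (i : B) (X : Finset B) (a : B) : Prop :=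
  ∃ s : D, LubIn (i : D) (Subtype.val '' (X : Set B)) s ∧ WayBelowP (a : D) s

section helpers

variable [PartialOrder D]

lemma wb_le {x y : D} (h : WayBelowP x y) : x ≤ y := by
  obtain ⟨u, hu, hle⟩ := h {y} ⟨y, rfl⟩
    (fun a ha b hb => ⟨y, rfl, by simp_all⟩) y isLUB_singleton le_rfl
  rwa [Set.mem_singleton_iff.mp hu] at hle

lemma le_wb_le {x x' y' y : D} (h1 : x ≤ x') (h2 : WayBelowP x' y') (h3 : y' ≤ y) :
    WayBelowP x y := by
  intro S hne hdir s hs hys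
  obtain ⟨u, hu, hle⟩ := h2 S hne hdir s hs (h3.trans hys)
  exact ⟨u, hu, h1.trans hle⟩

lemma lubin_unique {z : D} {S : Set D} {s s' : D} (h : LubIn z S s) (h' : LubIn z S s') :
    s = s' :=
  le_antisymm (h.2.2 s' h'.1 h'.2.1) (h'.2.2 s h.1 h.2.1)

lemma lubin_up {z z' : D} {S : Set D} {s s' : D} (hz : z ≤ z')
    (h : LubIn z S s) (h' : LubIn z' S s') : s = s' := by
  have h1 : s' ≤ s := h'.2.2 s (h.1.trans hz) h.2.1
  exact le_antisymm (h.2.2 s' (h1.trans h.1) h'.2.1) h1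

lemma bot_wb [OrderBot D] (y : D) : WayBelowP (⊥ : D) y :=
  fun _ hne _ _ _ _ => ⟨hne.choose, hne.choose_spec, bot_le⟩

lemma lubin_exists [OrderBot D] (hL : IsLDomain D) (z : D) (F : Finset D)
    (hF : ∀ a ∈ F, a ≤ z) : ∃ s, LubIn z ↑F s := by
  classical
  induction F using Finset.induction with
  | empty => exact ⟨⊥, bot_le, by simp, fun w hw _ => bot_le⟩
  | @insert a F ha ih =>
    obtain ⟨t, ht⟩ := ih (fun b hb => hF b (Finset.mem_insert_of_mem hb))
    obtain ⟨u, hu_le, hau, htu, hmin⟩ :=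
      hL.2 a t z (hF a (Finset.mem_insert_self a F)) ht.1
    refine ⟨u, hu_le, ?_, ?_⟩
    · intro b hb
      rcases Finset.mem_insert.mp (by exact_mod_cast hb) with rfl | hb
      · exact hau
      · exact (ht.2.1 b (by exact_mod_cast hb)).trans htu
    · intro w hw hbw
      exact hmin w hw (hbw a (by simp)) (ht.2.2 w hw fun b hb => hbw b (by
        simp only [Finset.coe_insert, Set.mem_insert_iff]
        exact Or.inr hb))

lemma conI_lub [OrderBot D] (hL : IsLDomain D) {B : Set D} (i : B) (X : Finset B)
    (h : ConI B i X) : ∃ s, LubIn (i : D) (Subtype.val '' (X : Set B)) s := by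
  classical
  obtain ⟨s, hs⟩ := lubin_exists hL (i : D) (X.image Subtype.val) (by
    intro a ha
    obtain ⟨b, hb, rfl⟩ := Finset.mem_image.mp ha
    exact h b hb)
  refine ⟨s, ?_⟩
  rwa [Finset.coe_image] at hs

lemma exists_bound_finset {α : Type*} {S : Set D} (hne : S.Nonempty)
    (hdir : DirectedOn (· ≤ ·) S) (p : α → D → Prop)
    (hmono : ∀ a c c', p a c → c ≤ c' → p a c') (Y : Finset α)
    (h : ∀ b ∈ Y, ∃ c ∈ S, p b c) : ∃ c ∈ S, ∀ b ∈ Y, p b c := by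
  classical
  induction Y using Finset.induction with
  | empty => exact ⟨hne.choose, hne.choose_spec, by simp⟩
  | @insert a Y ha ih =>
    obtain ⟨c1, hc1S, hc1⟩ := ih (fun b hb => h b (Finset.mem_insert_of_mem hb))
    obtain ⟨c2, hc2S, hc2⟩ := h a (Finset.mem_insert_self _ _)
    obtain ⟨c, hcS, h1, h2⟩ := hdir c1 hc1S c2 hc2S
    refine ⟨c, hcS, fun b hb => ?_⟩
    rcases Finset.mem_insert.mp hb with rfl | hb
    · exact hmono _ _ _ hc2 h2
    · exact hmono _ _ _ (hc1 b hb) h1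

/-- Interpolation: finitely many elements way below `s` are all way below a
single basis element that is itself way below `s`. -/
lemma interp {B : Set D} (hB : IsBasisOf B) {s : D} (Y : Finset B)
    (hY : ∀ b ∈ Y, WayBelowP (b : D) s) :
    ∃ c ∈ B, WayBelowP c s ∧ ∀ b ∈ Y, WayBelowP (b : D) c := by
  classical
  obtain ⟨S, hSsub, hSne, hSdir, hSlub⟩ := hB s
  choose T hT1 hT2 hT3 hT4 using hB
  set M : Set D := ⋃ c ∈ S, T c with hM
  have hMne : M.Nonempty := by
    obtain ⟨c0, hc0⟩ := hSne
    obtain ⟨v, hv⟩ := hT2 c0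
    exact ⟨v, Set.mem_biUnion hc0 hv⟩
  have hmemM : ∀ v ∈ M, ∃ c ∈ S, v ∈ T c := by
    intro v hv
    simpa [hM] using hv
  have hwbT : ∀ c, ∀ v ∈ T c, WayBelowP v c := fun c v hv => (hT1 c hv).2
  have hMdir : DirectedOn (· ≤ ·) M := by
    intro v1 hv1 v2 hv2
    obtain ⟨c1, hc1S, hv1T⟩ := hmemM v1 hv1
    obtain ⟨c2, hc2S, hv2T⟩ := hmemM v2 hv2
    obtain ⟨c3, hc3S, h13, h23⟩ := hSdir c1 hc1S c2 hc2S
    obtain ⟨u1, hu1, hle1⟩ := hwbT c1 v1 hv1T (T c3) (hT2 c3) (hT3 c3) c3 (hT4 c3) h13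
    obtain ⟨u2, hu2, hle2⟩ := hwbT c2 v2 hv2T (T c3) (hT2 c3) (hT3 c3) c3 (hT4 c3) h23
    obtain ⟨u, hu, hle1', hle2'⟩ := hT3 c3 u1 hu1 u2 hu2
    exact ⟨u, Set.mem_biUnion hc3S hu, hle1.trans hle1', hle2.trans hle2'⟩
  have hMlub : IsLUB M s := by
    constructor
    · intro v hv
      obtain ⟨c, hcS, hvT⟩ := hmemM v hv
      exact (wb_le (hwbT c v hvT)).trans (hSlub.1 hcS)
    · intro w hw
      apply hSlub.2
      intro c hc
      exact (hT4 c).2 fun v hv => hw (Set.mem_biUnion hc hv)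
  have h1 : ∀ b ∈ Y, ∃ c ∈ S, WayBelowP (b : D) c := by
    intro b hb
    obtain ⟨v, hvM, hbv⟩ := hY b hb M hMne hMdir s hMlub le_rfl
    obtain ⟨c, hcS, hvT⟩ := hmemM v hvM
    exact ⟨c, hcS, le_wb_le hbv (hwbT c v hvT) le_rfl⟩
  obtain ⟨c, hcS, hc⟩ := exists_bound_finset hSne hSdir
    (fun (b : B) (c : D) => WayBelowP (b : D) c)
    (fun a c c' h hle => le_wb_le le_rfl h hle) Y h1
  exact ⟨c, (hSsub hcS).1, (hSsub hcS).2, hc⟩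

end helpers

theorem stmt14 [PartialOrder D] [OrderBot D] (B : Set D)
    (hL : IsLDomain D) (hB : IsBasisOf B) (hbot : (⊥ : D) ∈ B) :
    IsISW (⟨⊥, hbot⟩ : B) (ConI B) (entI B) := by
  classical
  constructor
  · -- dom
    rintro i X a ⟨s, hs, -⟩ b hb
    exact (hs.2.1 b ⟨b, Finset.mem_coe.mpr hb, rfl⟩).trans hs.1
  · -- ax1
    intro i a ha
    rw [Finset.mem_singleton.mp ha]
  · -- ax2
    intro i X Y hYX hX a ha
    exact hX a (hYX ha)
  · -- ax3
    intro i
    refine ⟨⊥, ⟨bot_le, by simp, fun w _ _ => bot_le⟩, bot_wb _⟩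
  · -- ax4
    rintro i X Y _ hY b hb
    obtain ⟨s, hs, hwb⟩ := hY b hb
    exact (wb_le hwb).trans hs.1
  · -- ax5
    rintro i X Y a _ hY hXY ⟨s, hs, hwb⟩
    obtain ⟨t, ht⟩ := conI_lub hL i Y hY
    refine ⟨t, ht, le_wb_le le_rfl hwb ?_⟩
    refine hs.2.2 t ht.1 ?_
    rintro u ⟨b, hb, rfl⟩
    exact ht.2.1 b ⟨b, Finset.mem_coe.mpr (hXY (Finset.mem_coe.mp hb)), rfl⟩
  · -- ax6
    rintro i X Y a hX hY ⟨t, ht, hwa⟩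
    obtain ⟨s, hs⟩ := conI_lub hL i X hX
    refine ⟨s, hs, le_wb_le le_rfl hwa ?_⟩
    refine ht.2.2 s hs.1 ?_
    rintro u ⟨b, hb, rfl⟩
    obtain ⟨s', hs', hwb⟩ := hY b (Finset.mem_coe.mp hb)
    have := lubin_unique hs' hs
    exact (wb_le hwb).trans (le_of_eq this)
  · -- ax7
    intro i j hji X hX a ha
    exact (hX a ha).trans (hji i (Finset.mem_singleton_self i))
  · -- ax8
    rintro i j X a hji hX ⟨s, hs, hwb⟩
    have hij : (i : D) ≤ j := hji i (Finset.mem_singleton_self i)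
    obtain ⟨t, ht⟩ := conI_lub hL j X (fun b hb => (hX b hb).trans hij)
    refine ⟨t, ht, ?_⟩
    rwa [← lubin_up hij hs ht]
  · -- ax9
    rintro i j X a hji hX ⟨t, ht, hwb⟩
    have hij : (i : D) ≤ j := hji i (Finset.mem_singleton_self i)
    obtain ⟨s, hs⟩ := conI_lub hL i X hX
    refine ⟨s, hs, ?_⟩
    rwa [lubin_up hij hs ht]
  · -- ax10
    intro i X Y hX hY
    obtain ⟨s, hs⟩ := conI_lub hL i X hX
    have hYs : ∀ b ∈ Y, WayBelowP (b : D) s := by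
      intro b hb
      obtain ⟨s', hs', hw⟩ := hY b hb
      rwa [lubin_unique hs' hs] at hw
    obtain ⟨c, hcB, hcs, hYc⟩ := interp hB Y hYs
    set e : B := ⟨c, hcB⟩ with he
    have hlube : LubIn (e : D) (Subtype.val '' (({e} : Finset B) : Set B)) c := by
      refine ⟨le_rfl, ?_, fun w _ hb => hb c ⟨e, by simp, rfl⟩⟩
      rintro u ⟨b, hb, rfl⟩
      have : b = e := by simpa using hb
      rw [this]
    refine ⟨e, {e}, ?_, ⟨s, hs, hcs⟩, ?_, ?_⟩
    · intro a ha
      rw [Finset.mem_singleton.mp ha]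
    · intro b hb
      rw [Finset.mem_singleton.mp hb]
      exact ⟨s, hs, hcs⟩
    · intro b hb
      exact ⟨c, hlube, hYc b hb⟩
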